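/- Let A₁, A₂, A₃, A₄ be a partition of {0,1,...,n} into four nonempty disjoint subsets whose union is everything. Define the intersection number of a subset S (with 2 ≤ |S| ≤ n−1) with the F-curve C_{A₁,A₂,A₃,A₄} as: 1 if S = A_i ∪ A_j for some i ≠ j; −1 if S = A_i or Sᶜ = A_i for some i; 0 otherwise. Suppose m ∈ S, {m} is not equal to any block A_i, and the intersection number of S is nonzero. Then the intersection number of ψ_m(S) = (Sᶜ ∪ {m}) \ {0} is 0. -/
import Mathlib


def psim (n : ℕ) (m : Fin (n + 1)) (A : Set (Fin (n + 1))) : Set (Fin (n + 1)) :=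
  (Aᶜ ∪ {m}) \ {0}

open Classical in
/-- Intersection number of the boundary divisor `D_S` with the `F`-curve
`C_{A₁,A₂,A₃,A₄}`. -/
noncomputable def fInt (n : ℕ) (A : Fin 4 → Set (Fin (n + 1)))
    (S : Set (Fin (n + 1))) : ℤ :=
  if ∃ i j : Fin 4, i ≠ j ∧ S = A i ∪ A j then 1
  else if ∃ i : Fin 4, S = A i ∨ Sᶜ = A i then -1
  else 0

theorem stmt_7 (n : ℕ) (hn : 4 ≤ n) (A : Fin 4 → Set (Fin (n + 1)))
    (hdisj : Pairwise (Function.onFun Disjoint A))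
    (hne : ∀ i, (A i).Nonempty) (hcover : (⋃ i, A i) = Set.univ)
    (m : Fin (n + 1)) (hm : m ≠ 0)
    (S : Set (Fin (n + 1))) (hcard1 : 2 ≤ S.ncard) (hcard2 : S.ncard ≤ n - 1)
    (hmS : m ∈ S) (hblock : ∀ i, A i ≠ {m})
    (hnz : fInt n A S ≠ 0) :
    fInt n A (psim n m S) = 0 := by
  classical
  -- extract the disjunction from hnz
  have key : (∃ i j : Fin 4, i ≠ j ∧ S = A i ∪ A j) ∨
      (∃ i : Fin 4, S = A i ∨ Sᶜ = A i) := by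
    by_contra h
    push_neg at h
    have h2 : ¬ ∃ i : Fin 4, S = A i ∨ Sᶜ = A i := by
      rintro ⟨i, hi⟩
      rcases hi with hi | hi
      · exact (h.2 i).1 hi
      · exact (h.2 i).2 hi
    have h1 : ¬ ∃ i j : Fin 4, i ≠ j ∧ S = A i ∪ A j := by
      rintro ⟨i, j, hij, hS⟩
      exact h.1 i j hij hS
    simp only [fInt, if_neg h1, if_neg h2] at hnz
    exact hnz rfl
  -- disjointness as a pointwise statement
  have hdis : ∀ (x : Fin (n+1)) (r s : Fin 4), x ∈ A r → x ∈ A s → r = s := by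
    intro x r s hr hs
    by_contra hrs
    exact (hdisj hrs).le_bot (⟨hr, hs⟩ : x ∈ A r ⊓ A s)
  -- the block containing m
  obtain ⟨b, hb⟩ : ∃ b, m ∈ A b := by
    have : m ∈ ⋃ i, A i := hcover ▸ Set.mem_univ m
    simpa using this
  -- each block has an element ≠ m
  have hblock' : ∀ r : Fin 4, ∃ x ∈ A r, x ≠ m := by
    intro r
    by_contra h
    push_neg at h
    have : A r ⊆ {m} := fun x hx => h x hx
    rcases Set.subset_singleton_iff_eq.mp this with h0 | h1
    · exact (hne r).ne_empty h0
    · exact hblock r h1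
  -- the block containing m is contained in S
  have hbS : A b ⊆ S := by
    rcases key with ⟨i, j, hij, hS⟩ | ⟨i, hS | hS⟩
    · have hm' : m ∈ A i ∪ A j := hS ▸ hmS
      rcases hm' with h | h
      · rw [hdis m b i hb h, hS]; exact Set.subset_union_left
      · rw [hdis m b j hb h, hS]; exact Set.subset_union_right
    · rw [hdis m b i hb (hS ▸ hmS)]; exact hS.ge
    · intro x hx
      have hbi : b ≠ i := by
        intro e
        have : m ∈ Sᶜ := hS ▸ (e ▸ hb)
        exact this hmS
      by_contra hxS
      have hxi : x ∈ A i := hS ▸ (hxS : x ∈ Sᶜ)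
      exact hbi (hdis x b i hx hxi)
  set T := psim n m S with hT
  have hmT : m ∈ T := ⟨Or.inr rfl, hm⟩
  -- T meets A b only in m
  have hTb : ∀ x, x ∈ T → x ∈ A b → x = m := by
    rintro x ⟨hx1, _⟩ hx2
    rcases hx1 with hx1 | hx1
    · exact absurd (hbS hx2) hx1
    · exact hx1
  -- elements of S other than m are not in T
  have hTc : ∀ x, x ∈ S → x ≠ m → x ∉ T := by
    rintro x hxS hxm ⟨hx1, _⟩
    rcases hx1 with hx1 | hx1
    · exact hx1 hxS
    · exact hxm hx1
  -- no block equals a set whose intersection with A b is ⊆ {m}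
  have habm : ∀ (U : Set (Fin (n+1))), (∀ x, x ∈ U → x ∈ A b → x = m) →
      A b ⊆ U → False := by
    intro U hU hsub
    have : A b ⊆ {m} := fun x hx => hU x (hsub hx) hx
    rcases Set.subset_singleton_iff_eq.mp this with h0 | h1
    · exact (hne b).ne_empty h0
    · exact hblock b h1
  have hC1 : ¬ ∃ i j : Fin 4, i ≠ j ∧ T = A i ∪ A j := by
    rintro ⟨p, q, hpq, hTpq⟩
    have hmT' : m ∈ A p ∪ A q := hTpq ▸ hmT
    rcases hmT' with h | h
    · have : b = p := hdis m b p hb h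
      subst this
      exact habm T hTb (hTpq ▸ Set.subset_union_left)
    · have : b = q := hdis m b q hb h
      subst this
      exact habm T hTb (hTpq ▸ Set.subset_union_right)
  have hC2 : ¬ ∃ i : Fin 4, T = A i ∨ Tᶜ = A i := by
    rintro ⟨p, hp | hp⟩
    · have hmp : m ∈ A p := hp ▸ hmT
      have : b = p := hdis m b p hb hmp
      subst this
      exact habm T hTb hp.ge
    · -- Tᶜ = A p
      have hsub : ∀ r : Fin 4, A r ⊆ S → p = r := by
        intro r hr
        obtain ⟨x, hx, hxm⟩ := hblock' r
        have hxT : x ∉ T := hTc x (hr hx) hxm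
        have hxp : x ∈ A p := hp ▸ (hxT : x ∈ Tᶜ)
        exact hdis x p r hxp hx
      rcases key with ⟨i, j, hij, hS⟩ | ⟨i, hS | hS⟩
      · have h1 : p = i := hsub i (hS ▸ Set.subset_union_left)
        have h2 : p = j := hsub j (hS ▸ Set.subset_union_right)
        exact hij (h1 ▸ h2)
      · have h1 : p = i := hsub i hS.ge
        have hbi : b = i := hdis m b i hb (hS ▸ hmS)
        have : m ∈ Tᶜ := hp ▸ (h1 ▸ hbi ▸ hb : m ∈ A p)
        exact this hmT
      · -- Sᶜ = A i : find two distinct indices ≠ i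
        obtain ⟨r, s, hrs, hri, hsi⟩ : ∃ r s : Fin 4, r ≠ s ∧ r ≠ i ∧ s ≠ i := by
          fin_cases i <;> decide
        have hrS : ∀ t : Fin 4, t ≠ i → A t ⊆ S := by
          intro t ht x hx
          by_contra hxS
          have : x ∈ A i := hS ▸ (hxS : x ∈ Sᶜ)
          exact ht (hdis x t i hx this)
        have h1 : p = r := hsub r (hrS r hri)
        have h2 : p = s := hsub s (hrS s hsi)
        exact hrs (h1 ▸ h2)
  simp only [fInt, if_neg hC1, if_neg hC2]
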